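/- Let T ∈ GL(2,ℝ) have two real negative eigenvalues, and let a be an eigenvector of T with 0 < ‖a‖ < 1/‖T⁻¹‖ (so ‖T⁻¹a‖ < 1). Then ā = a/‖a‖ is a periodic point of order 2 for the map T̄ₐ(x) = (a+T(x))/‖a+T(x)‖ on S¹, i.e., T̄ₐ²(ā) = ā and T̄ₐ(ā) ≠ ā. -/

import Mathlib

/-- The "affine" map `x ↦ (a + T(x))/‖a + T(x)‖` induced on the unit sphere. -/
noncomputable def affAct {m : ℕ} (A : Matrix (Fin m) (Fin m) ℝ)
    (a x : EuclideanSpace ℝ (Fin m)) : EuclideanSpace ℝ (Fin m) :=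
  ‖a + Matrix.toEuclideanLin A x‖⁻¹ • (a + Matrix.toEuclideanLin A x)

lemma aux_norm_smul (c : ℝ) (hc : c < 0) (a : EuclideanSpace ℝ (Fin 2)) (ha : a ≠ 0) :
    ‖c • a‖⁻¹ • (c • a) = -(‖a‖⁻¹ • a) := by
  rw [norm_smul, smul_smul]
  have hna : ‖a‖ ≠ 0 := norm_ne_zero_iff.mpr ha
  have : (‖c‖ * ‖a‖)⁻¹ * c = -(‖a‖⁻¹) := by
    rw [Real.norm_eq_abs, abs_of_neg hc]
    field_simp
    rw [div_self (ne_of_lt hc)]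
  rw [this, neg_smul]

lemma aux_norm_smul' (c : ℝ) (hc : 0 < c) (a : EuclideanSpace ℝ (Fin 2)) (ha : a ≠ 0) :
    ‖c • a‖⁻¹ • (c • a) = ‖a‖⁻¹ • a := by
  rw [norm_smul, smul_smul]
  have hna : ‖a‖ ≠ 0 := norm_ne_zero_iff.mpr ha
  have : (‖c‖ * ‖a‖)⁻¹ * c = ‖a‖⁻¹ := by
    rw [Real.norm_eq_abs, abs_of_pos hc]
    field_simp
  rw [this]

theorem stmt17 (T : GL (Fin 2) ℝ) (l l' : ℝ) (hl : l < 0) (hl' : l' < 0)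
    (a : EuclideanSpace ℝ (Fin 2))
    (hTa : Matrix.toEuclideanLin (T : Matrix (Fin 2) (Fin 2) ℝ) a = l • a)
    (heig' : ∃ v : EuclideanSpace ℝ (Fin 2), v ≠ 0 ∧
      Matrix.toEuclideanLin (T : Matrix (Fin 2) (Fin 2) ℝ) v = l' • v)
    (ha0 : 0 < ‖a‖)
    (ha1 : ‖a‖ < 1 / ‖Matrix.toEuclideanCLM (𝕜 := ℝ) ((T⁻¹ : GL (Fin 2) ℝ) : Matrix (Fin 2) (Fin 2) ℝ)‖) :
    affAct (T : Matrix (Fin 2) (Fin 2) ℝ) a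
        (affAct (T : Matrix (Fin 2) (Fin 2) ℝ) a (‖a‖⁻¹ • a)) = ‖a‖⁻¹ • a ∧
    affAct (T : Matrix (Fin 2) (Fin 2) ℝ) a (‖a‖⁻¹ • a) ≠ ‖a‖⁻¹ • a := by
  have haz : a ≠ 0 := fun h => by simp [h] at ha0
  have hna : ‖a‖ ≠ 0 := ne_of_gt ha0
  set C := Matrix.toEuclideanCLM (𝕜 := ℝ) ((T⁻¹ : GL (Fin 2) ℝ) : Matrix (Fin 2) (Fin 2) ℝ) with hC
  -- key inequality : ‖a‖ < -l
  have hCa : C a = l⁻¹ • a := by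
    have h1 : C (Matrix.toEuclideanLin (T : Matrix (Fin 2) (Fin 2) ℝ) a) = a := by
      have : C * (Matrix.toEuclideanCLM (𝕜 := ℝ) (T : Matrix (Fin 2) (Fin 2) ℝ)) = 1 := by
        rw [hC, ← map_mul]
        have : ((T⁻¹ : GL (Fin 2) ℝ) : Matrix (Fin 2) (Fin 2) ℝ) *
            ((T : GL (Fin 2) ℝ) : Matrix (Fin 2) (Fin 2) ℝ) = 1 := by
          exact_mod_cast T.inv_mul
        rw [this, map_one]
      have h2 : Matrix.toEuclideanLin (T : Matrix (Fin 2) (Fin 2) ℝ) a =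
          Matrix.toEuclideanCLM (𝕜 := ℝ) (T : Matrix (Fin 2) (Fin 2) ℝ) a := by
        rw [← Matrix.coe_toEuclideanCLM_eq_toEuclideanLin]; rfl
      rw [h2, ← ContinuousLinearMap.mul_apply, this, ContinuousLinearMap.one_apply]
    rw [hTa, map_smul] at h1
    have : l⁻¹ • l • C a = l⁻¹ • a := by rw [h1]
    rwa [smul_smul, inv_mul_cancel₀ (ne_of_lt hl), one_smul] at this
  have hCn : 0 < ‖C‖ := by
    by_contra h
    push_neg at h
    have hC0 : C = 0 := norm_le_zero_iff.mp h
    rw [hC0] at hCa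
    simp only [ContinuousLinearMap.zero_apply] at hCa
    rcases smul_eq_zero.mp hCa.symm with h' | h'
    · exact absurd h' (inv_ne_zero (ne_of_lt hl))
    · exact haz h'
  have hlb : |l|⁻¹ ≤ ‖C‖ := by
    have h1 : ‖C a‖ ≤ ‖C‖ * ‖a‖ := C.le_opNorm a
    rw [hCa, norm_smul, Real.norm_eq_abs, abs_inv] at h1
    have := le_of_mul_le_mul_right h1 ha0
    exact this
  have hal : ‖a‖ < -l := by
    have h2 : 1 / ‖C‖ ≤ |l| := by
      rw [div_le_iff₀ hCn]
      calc 1 = |l| * |l|⁻¹ := (mul_inv_cancel₀ (abs_ne_zero.mpr (ne_of_lt hl))).symm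
        _ ≤ |l| * ‖C‖ := by
            exact mul_le_mul_of_nonneg_left hlb (abs_nonneg l)
    have := lt_of_lt_of_le ha1 h2
    rwa [abs_of_neg hl] at this
  -- compute the first application
  have hTu : Matrix.toEuclideanLin (T : Matrix (Fin 2) (Fin 2) ℝ) (‖a‖⁻¹ • a)
      = (‖a‖⁻¹ * l) • a := by
    rw [map_smul, hTa, smul_smul]
  have hc1 : (1 : ℝ) + ‖a‖⁻¹ * l < 0 := by
    have : ‖a‖⁻¹ * l < -1 := by
      rw [mul_comm, ← div_eq_mul_inv, div_lt_iff₀ ha0]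
      linarith
    linarith
  have step1 : affAct (T : Matrix (Fin 2) (Fin 2) ℝ) a (‖a‖⁻¹ • a) = -(‖a‖⁻¹ • a) := by
    unfold affAct
    rw [hTu]
    have : a + (‖a‖⁻¹ * l) • a = (1 + ‖a‖⁻¹ * l) • a := by
      rw [add_smul, one_smul]
    rw [this, aux_norm_smul _ hc1 a haz]
  have hTu' : Matrix.toEuclideanLin (T : Matrix (Fin 2) (Fin 2) ℝ) (-(‖a‖⁻¹ • a))
      = (-(‖a‖⁻¹ * l)) • a := by
    rw [map_neg, hTu, neg_smul]
  have hc2 : (0 : ℝ) < 1 + -(‖a‖⁻¹ * l) := by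
    have : ‖a‖⁻¹ * l < 0 := mul_neg_of_pos_of_neg (inv_pos.mpr ha0) hl
    linarith
  constructor
  · rw [step1]
    unfold affAct
    rw [hTu']
    have : a + (-(‖a‖⁻¹ * l)) • a = (1 + -(‖a‖⁻¹ * l)) • a := by
      rw [add_smul, one_smul]
    rw [this, aux_norm_smul' _ hc2 a haz]
  · rw [step1]
    intro h
    have : (2 : ℝ) • (‖a‖⁻¹ • a) = 0 := by
      rw [two_smul]
      nth_rewrite 1 [← h]
      exact neg_add_cancel _
    simp only [smul_smul, smul_eq_zero] at this
    rcases this with h' | h'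
    · rcases mul_eq_zero.mp h' with h'' | h''
      · norm_num at h''
      · exact (inv_ne_zero hna) h''
    · exact haz h'
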